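/- Let $\omega_0 \in (0, \pi/2)$ and $\beta, \tau, \theta_0 > 0$ small so that $(2+\beta+\tau)\omega_0 + \theta_0 < \pi$. Then with $\bar\theta = (2+\beta+\tau)\theta + \theta_0$, the function $v_5(r,\theta) = r^{-2-\beta}(\sin\bar\theta + (\sin\theta)^{\alpha})$, for $\alpha\in(0,1)$, satisfies $\sin\bar\theta > 0$ for all $\theta\in[0,\omega_0]$ (so $v_5 > 0$ on the closed sector minus the origin) and $\Delta v_5 \le -c\,r^{-4-\beta}(\sin\theta)^{-2+\alpha}$ on the open sector, for some $c > 0$, after multiplying the $\sin\bar\theta$ term by a sufficiently large constant. -/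

import Mathlib

open Real

/-- sin is bounded below on a subinterval of (0,π) by min of endpoint values. -/
lemma sin_ge_min_aux {x lo hi : ℝ} (h0 : 0 < lo) (hπ : hi < Real.pi)
    (hl : lo ≤ x) (hh : x ≤ hi) :
    min (Real.sin lo) (Real.sin hi) ≤ Real.sin x := by
  rcases le_or_gt x (Real.pi/2) with hx | hx
  · refine le_trans (min_le_left _ _) ?_
    exact Real.sin_le_sin_of_le_of_le_pi_div_two (by linarith [Real.pi_pos]) hx hl
  · refine le_trans (min_le_right _ _) ?_
    rw [← Real.sin_pi_sub hi, ← Real.sin_pi_sub x]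
    exact Real.sin_le_sin_of_le_of_le_pi_div_two (by linarith) (by linarith) (by linarith)

lemma deriv_rad (a C : ℝ) {r : ℝ} (hr : 0 < r) :
    deriv (fun s : ℝ => s ^ a * C) r = a * r ^ (a-1) * C :=
  ((Real.hasDerivAt_rpow_const (Or.inl hr.ne')).mul_const C).deriv

lemma deriv2_rad (a C : ℝ) {r : ℝ} (hr : 0 < r) :
    deriv (deriv (fun s : ℝ => s ^ a * C)) r = a * (a-1) * r ^ (a-2) * C := by
  have hev : deriv (fun s : ℝ => s ^ a * C) =ᶠ[nhds r]
      fun s => a * s ^ (a-1) * C := by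
    filter_upwards [Ioi_mem_nhds hr] with s hs
    exact deriv_rad a C hs
  rw [hev.deriv_eq]
  have h := (((Real.hasDerivAt_rpow_const (p := a-1) (Or.inl hr.ne')).const_mul a).mul_const C).deriv
  rw [h, show a - 1 - 1 = a - 2 by ring]
  ring

lemma deriv_ang (C K m θ₀ α : ℝ) {θ : ℝ} (h0 : 0 < θ) (hπ : θ < Real.pi) :
    deriv (fun t : ℝ => C * (K * Real.sin (m*t + θ₀) + Real.sin t ^ α)) θ
      = C * (K * (Real.cos (m*θ+θ₀) * m) + Real.cos θ * (α * Real.sin θ ^ (α-1))) := by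
  have hs : Real.sin θ ≠ 0 := (Real.sin_pos_of_pos_of_lt_pi h0 hπ).ne'
  have h1 : HasDerivAt (fun t : ℝ => m*t + θ₀) m θ := by
    simpa using ((hasDerivAt_id θ).const_mul m).add_const θ₀
  have h2 : HasDerivAt (fun t => Real.sin (m*t+θ₀)) (Real.cos (m*θ+θ₀) * m) θ :=
    (Real.hasDerivAt_sin _).comp θ h1
  have h3 : HasDerivAt (fun t : ℝ => Real.sin t ^ α)
      (Real.cos θ * (α * Real.sin θ ^ (α-1))) θ := by
    simpa [mul_assoc] using (Real.hasDerivAt_sin θ).rpow_const (p := α) (Or.inl hs)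
  exact (((h2.const_mul K).add h3).const_mul C).deriv

lemma deriv2_ang (C K m θ₀ α : ℝ) {θ : ℝ} (h0 : 0 < θ) (hπ : θ < Real.pi) :
    deriv (deriv (fun t : ℝ => C * (K * Real.sin (m*t + θ₀) + Real.sin t ^ α))) θ
      = C * (-(K * (Real.sin (m*θ+θ₀) * m * m))
          + (α*(α-1) * Real.cos θ^2 * Real.sin θ ^ (α-2) - α * Real.sin θ ^ α)) := by
  have hs : 0 < Real.sin θ := Real.sin_pos_of_pos_of_lt_pi h0 hπ
  have hev : deriv (fun t : ℝ => C * (K * Real.sin (m*t + θ₀) + Real.sin t ^ α)) =ᶠ[nhds θ]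
      fun t => C * (K * (Real.cos (m*t+θ₀) * m) + Real.cos t * (α * Real.sin t ^ (α-1))) := by
    filter_upwards [Ioo_mem_nhds h0 hπ] with t ht
    exact deriv_ang C K m θ₀ α ht.1 ht.2
  rw [hev.deriv_eq]
  have h1 : HasDerivAt (fun t : ℝ => m*t + θ₀) m θ := by
    simpa using ((hasDerivAt_id θ).const_mul m).add_const θ₀
  have h2 : HasDerivAt (fun t => Real.cos (m*t+θ₀)) (-Real.sin (m*θ+θ₀) * m) θ :=
    (Real.hasDerivAt_cos _).comp θ h1
  have h3 : HasDerivAt (fun t : ℝ => Real.sin t ^ (α-1))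
      (Real.cos θ * (α-1) * Real.sin θ ^ (α-1-1)) θ :=
    (Real.hasDerivAt_sin θ).rpow_const (Or.inl hs.ne')
  have h4 : HasDerivAt (fun t : ℝ => Real.cos t * (α * Real.sin t ^ (α-1)))
      (-Real.sin θ * (α * Real.sin θ ^ (α-1))
        + Real.cos θ * (α * (Real.cos θ * (α-1) * Real.sin θ ^ (α-1-1)))) θ :=
    (Real.hasDerivAt_cos θ).mul (h3.const_mul α)
  have htotal := ((((h2.mul_const m).const_mul K).add h4).const_mul C).deriv
  simp only [Pi.add_apply] at htotal
  rw [htotal, show α - 1 - 1 = α - 2 by ring]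
  have hsa : Real.sin θ ^ α = Real.sin θ ^ (α-1) * Real.sin θ := by
    rw [show α = α - 1 + 1 by ring, Real.rpow_add_one hs.ne']
    ring_nf
  rw [hsa]; ring

/-- the barrier `v₅ = r^{-2-β}(sin θ̄ + (sin θ)^α)` is positive on
the closed sector minus the origin and, after enlarging the `sin θ̄` term, its
polar Laplacian is bounded by `-c r^{-4-β} (sin θ)^{-2+α}`. -/
theorem enhanced_decay_barrier
    (α β ω₀ τ θ₀ : ℝ) (hα : α ∈ Set.Ioo (0:ℝ) 1)
    (hω : ω₀ ∈ Set.Ioo 0 (Real.pi/2)) (hβ : 0 < β) (hτ : 0 < τ) (hθ₀ : 0 < θ₀)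
    (hsum : (2+β+τ)*ω₀ + θ₀ < Real.pi) :
    (∀ θ ∈ Set.Icc 0 ω₀, 0 < Real.sin ((2+β+τ)*θ + θ₀)) ∧
    (∀ r : ℝ, 0 < r → ∀ θ ∈ Set.Icc 0 ω₀,
      0 < r ^ (-2-β) * (Real.sin ((2+β+τ)*θ + θ₀) + Real.sin θ ^ α)) ∧
    (∃ K ≥ (1:ℝ), ∃ c > 0, ∀ r θ : ℝ, 0 < r → 0 < θ → θ < ω₀ →
      deriv (deriv (fun s : ℝ =>
          s ^ (-2-β) * (K * Real.sin ((2+β+τ)*θ + θ₀) + Real.sin θ ^ α))) r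
        + r⁻¹ * deriv (fun s : ℝ =>
          s ^ (-2-β) * (K * Real.sin ((2+β+τ)*θ + θ₀) + Real.sin θ ^ α)) r
        + (r⁻¹)^2 * deriv (deriv (fun t : ℝ =>
          r ^ (-2-β) * (K * Real.sin ((2+β+τ)*t + θ₀) + Real.sin t ^ α))) θ
      ≤ -c * r ^ (-4-β) * Real.sin θ ^ (-2+α)) := by
  obtain ⟨hα0, hα1⟩ := hα
  obtain ⟨hω0, hω2⟩ := hω
  have hπ0 := Real.pi_pos
  have hm : (0:ℝ) < 2+β+τ := by linarith
  have part1 : ∀ θ ∈ Set.Icc 0 ω₀, 0 < Real.sin ((2+β+τ)*θ + θ₀) := by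
    rintro θ ⟨hθ0, hθω⟩
    apply Real.sin_pos_of_pos_of_lt_pi
    · nlinarith [mul_nonneg hm.le hθ0]
    · nlinarith [mul_le_mul_of_nonneg_left hθω hm.le]
  refine ⟨part1, ?_, ?_⟩
  · intro r hr θ hθ
    have h1 := part1 θ hθ
    have h2 : 0 ≤ Real.sin θ ^ α :=
      Real.rpow_nonneg (Real.sin_nonneg_of_nonneg_of_le_pi hθ.1 (by linarith [hθ.2])) α
    have h3 : (0:ℝ) < r ^ (-2-β) := Real.rpow_pos_of_pos hr _
    have : 0 < Real.sin ((2+β+τ)*θ + θ₀) + Real.sin θ ^ α := by linarith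
    exact mul_pos h3 this
  · set m : ℝ := 2+β+τ with hm_def
    set s₀ : ℝ := min (Real.sin θ₀) (Real.sin (m*ω₀ + θ₀)) with hs₀_def
    have hmω : 0 < m * ω₀ := mul_pos hm hω0
    have hs₀ : 0 < s₀ := by
      apply lt_min
      · exact Real.sin_pos_of_pos_of_lt_pi hθ₀ (by nlinarith)
      · exact Real.sin_pos_of_pos_of_lt_pi (by nlinarith) (by linarith)
    set A : ℝ := m^2 - (2+β)^2 with hA_def
    have hA : 0 < A := by
      rw [hA_def, hm_def]; nlinarith
    have hcosω : 0 < Real.cos ω₀ := Real.cos_pos_of_mem_Ioo ⟨by linarith, hω2⟩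
    have hAs : 0 < A * s₀ := mul_pos hA hs₀
    refine ⟨max 1 ((2+β)^2 / (A * s₀)), le_max_left _ _,
      α*(1-α)*Real.cos ω₀^2, mul_pos (mul_pos hα0 (by linarith)) (pow_pos hcosω 2), ?_⟩
    set K : ℝ := max 1 ((2+β)^2 / (A * s₀)) with hK_def
    set c : ℝ := α*(1-α)*Real.cos ω₀^2 with hc_def
    have hK1 : (1:ℝ) ≤ K := le_max_left _ _
    have hK6 : (2+β)^2 ≤ K * (A * s₀) := by
      have := le_max_right (1:ℝ) ((2+β)^2 / (A * s₀))
      rw [div_le_iff₀ hAs] at this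
      calc (2+β)^2 ≤ ((2+β)^2 / (A * s₀)) * (A * s₀) := by
            rw [div_mul_cancel₀]; exact hAs.ne'
        _ ≤ K * (A * s₀) := by
            exact mul_le_mul_of_nonneg_right (le_max_right _ _) hAs.le
    intro r θ hr hθ0 hθω
    have hθπ : θ < Real.pi := by linarith
    have hsθ : 0 < Real.sin θ := Real.sin_pos_of_pos_of_lt_pi hθ0 hθπ
    have hsθ1 : Real.sin θ ≤ 1 := Real.sin_le_one θ
    rw [deriv2_rad (-2-β) (K * Real.sin (m*θ + θ₀) + Real.sin θ ^ α) hr,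
        deriv_rad (-2-β) (K * Real.sin (m*θ + θ₀) + Real.sin θ ^ α) hr,
        deriv2_ang (r ^ (-2-β)) K m θ₀ α hθ0 hθπ]
    have e1 : r ^ (-2-β-2 : ℝ) = r ^ (-4-β : ℝ) := by congr 1; ring
    have e2 : r⁻¹ * r ^ (-2-β-1 : ℝ) = r ^ (-4-β : ℝ) := by
      rw [← Real.rpow_neg_one r, ← Real.rpow_add hr]
      congr 1; ring
    have e3 : (r⁻¹)^2 * r ^ (-2-β : ℝ) = r ^ (-4-β : ℝ) := by
      rw [show ((-4:ℝ)-β) = (-1) + (-1) + (-2-β) by ring, Real.rpow_add hr,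
        Real.rpow_add hr, Real.rpow_neg_one, sq]
    have e4 : (-2+α : ℝ) = α - 2 := by ring
    rw [e1, e4]
    have hrp : (0:ℝ) < r ^ (-4-β : ℝ) := Real.rpow_pos_of_pos hr _
    have key : (-2-β) * (-2-β-1) * r ^ (-4-β:ℝ) * (K * Real.sin (m*θ + θ₀) + Real.sin θ ^ α)
        + r⁻¹ * ((-2-β) * r ^ (-2-β-1:ℝ) * (K * Real.sin (m*θ + θ₀) + Real.sin θ ^ α))
        + (r⁻¹)^2 * (r ^ (-2-β:ℝ) * (-(K * (Real.sin (m*θ+θ₀) * m * m))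
            + (α*(α-1) * Real.cos θ^2 * Real.sin θ ^ (α-2) - α * Real.sin θ ^ α)))
        = r ^ (-4-β:ℝ) * (((2+β)^2 - m^2) * K * Real.sin (m*θ+θ₀)
            + ((2+β)^2 - α) * Real.sin θ ^ α
            + α*(α-1) * Real.cos θ^2 * Real.sin θ ^ (α-2)) := by
      rw [show r⁻¹ * ((-2-β) * r ^ (-2-β-1:ℝ) * (K * Real.sin (m*θ + θ₀) + Real.sin θ ^ α))
            = (-2-β) * (r⁻¹ * r ^ (-2-β-1:ℝ)) * (K * Real.sin (m*θ + θ₀) + Real.sin θ ^ α)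
          by ring,
        e2,
        show (r⁻¹)^2 * (r ^ (-2-β:ℝ) * (-(K * (Real.sin (m*θ+θ₀) * m * m))
            + (α*(α-1) * Real.cos θ^2 * Real.sin θ ^ (α-2) - α * Real.sin θ ^ α)))
            = ((r⁻¹)^2 * r ^ (-2-β:ℝ)) * (-(K * (Real.sin (m*θ+θ₀) * m * m))
            + (α*(α-1) * Real.cos θ^2 * Real.sin θ ^ (α-2) - α * Real.sin θ ^ α))
          by ring,
        e3]
      ring
    rw [key, show -c * r ^ (-4-β:ℝ) * Real.sin θ ^ (α-2)
          = r ^ (-4-β:ℝ) * (-c * Real.sin θ ^ (α-2)) by ring]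
    apply mul_le_mul_of_nonneg_left _ hrp.le
    clear key e1 e2 e3 e4 hrp
    -- the angular bracket bound
    have hb1 : s₀ ≤ Real.sin (m*θ + θ₀) := by
      apply sin_ge_min_aux hθ₀ (by linarith)
      · linarith [mul_nonneg hm.le hθ0.le]
      · linarith [mul_le_mul_of_nonneg_left hθω.le hm.le]
    have hb2 : Real.sin θ ^ α ≤ 1 := Real.rpow_le_one hsθ.le hsθ1 hα0.le
    have hb3 : 0 ≤ Real.sin θ ^ α := Real.rpow_nonneg hsθ.le α
    have hb4 : Real.cos ω₀ ≤ Real.cos θ :=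
      Real.cos_le_cos_of_nonneg_of_le_pi hθ0.le (by linarith) hθω.le
    have hb5 : 1 ≤ Real.sin θ ^ (α-2 : ℝ) :=
      Real.one_le_rpow_of_pos_of_le_one_of_nonpos hsθ hsθ1 (by linarith)
    have hcosθ : 0 < Real.cos θ := lt_of_lt_of_le hcosω hb4
    have t1 : ((2+β)^2 - m^2) * K * Real.sin (m*θ+θ₀) ≤ -(2+β)^2 := by
      have h₁ : K * s₀ ≤ K * Real.sin (m*θ+θ₀) :=
        mul_le_mul_of_nonneg_left hb1 (by linarith)
      have h₂ : A * (K * s₀) ≤ A * (K * Real.sin (m*θ+θ₀)) :=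
        mul_le_mul_of_nonneg_left h₁ hA.le
      have hA' : (2+β)^2 - m^2 = -A := by rw [hA_def]; ring
      have hgoal : (2+β)^2 ≤ A * (K * Real.sin (m*θ+θ₀)) := by linarith [hK6, h₂]
      have hrw : ((2+β)^2 - m^2) * K * Real.sin (m*θ+θ₀)
          = -(A * (K * Real.sin (m*θ+θ₀))) := by rw [hA_def]; ring
      rw [hrw]; linarith [hgoal]
    have hcoef : (0:ℝ) ≤ (2+β)^2 - α := by nlinarith [sq_nonneg β]
    have t2 : ((2+β)^2 - α) * Real.sin θ ^ α ≤ (2+β)^2 - α := by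
      linarith [mul_le_mul_of_nonneg_left hb2 hcoef]
    have t3 : α*(α-1) * Real.cos θ^2 * Real.sin θ ^ (α-2:ℝ)
        ≤ -c * Real.sin θ ^ (α-2:ℝ) := by
      have hsq : Real.cos ω₀^2 ≤ Real.cos θ^2 := by
        linarith [mul_le_mul hb4 hb4 hcosω.le hcosθ.le]
      have hS : (0:ℝ) ≤ Real.sin θ ^ (α-2:ℝ) := by linarith
      have : 0 ≤ α*(1-α) * (Real.cos θ^2 - Real.cos ω₀^2) * Real.sin θ ^ (α-2:ℝ) := by
        apply mul_nonneg _ hS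
        exact mul_nonneg (mul_nonneg hα0.le (by linarith)) (by linarith)
      rw [hc_def]
      linarith [this]
    linarith [t1, t2, t3, hα0]
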